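/- The semidefinite program S(2,3) is feasible: there exist real symmetric positive semidefinite 3×3 matrices Q_0, Q_1, Q_2 such that Q_0 = E/3 (E the 3×3 all-ones matrix), Q_2 = I/3 (I the 3×3 identity), Tr Q_1 = 1, and the signed-trace constraints 𝒯_1 Q_1 = 𝒯_1 Q_0 and 𝒯_2 Q_2 = 𝒯_2 Q_1 hold, where (𝒯_t X)_i = Tr_i X + (−1)^t Tr_{i−3} X for i = 1, 2. -/

import Mathlib

/-- The trace of a real `N × N` matrix along its `i`-th superdiagonal (for `i < 0`, along its
`(-i)`-th subdiagonal). -/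
noncomputable def diagTraceR {N : ℕ} (M : Matrix (Fin N) (Fin N) ℝ) (i : ℤ) : ℝ :=
  ∑ a : Fin N, ∑ b : Fin N, if (b : ℤ) - (a : ℤ) = i then M a b else 0

/-- The signed trace `(𝒯_t X)_i = Tr_i X + (-1)^t Tr_{i-N} X`. -/
noncomputable def signedTrace {N : ℕ} (t : ℕ) (X : Matrix (Fin N) (Fin N) ℝ) (i : ℤ) : ℝ :=
  diagTraceR X i + (-1) ^ t * diagTraceR X (i - (N : ℤ))

/-- The semidefinite program `S(2,3)` is feasible: there are real symmetric positive
semidefinite `3 × 3` matrices `Q₀, Q₁, Q₂` with `Q₀ = E/3`, `Q₂ = I/3`, `Tr Q₁ = 1`,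
`𝒯₁ Q₁ = 𝒯₁ Q₀` and `𝒯₂ Q₂ = 𝒯₂ Q₁`. -/
theorem sdp_two_three_feasible :
    ∃ Q₀ Q₁ Q₂ : Matrix (Fin 3) (Fin 3) ℝ,
      Q₀.IsSymm ∧ Q₀.PosSemidef ∧ Q₁.IsSymm ∧ Q₁.PosSemidef ∧ Q₂.IsSymm ∧ Q₂.PosSemidef ∧
      Q₀ = ((3 : ℝ))⁻¹ • Matrix.of (fun _ _ => (1 : ℝ)) ∧
      Q₂ = ((3 : ℝ))⁻¹ • (1 : Matrix (Fin 3) (Fin 3) ℝ) ∧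
      Q₁.trace = 1 ∧
      (∀ i : ℤ, 1 ≤ i → i ≤ 2 → signedTrace 1 Q₁ i = signedTrace 1 Q₀ i) ∧
      (∀ i : ℤ, 1 ≤ i → i ≤ 2 → signedTrace 2 Q₂ i = signedTrace 2 Q₁ i) := by
  refine ⟨((3 : ℝ))⁻¹ • Matrix.of (fun _ _ => (1 : ℝ)),
    !![1/3, 1/6, -1/6; 1/6, 1/3, 0; -1/6, 0, 1/3],
    ((3 : ℝ))⁻¹ • (1 : Matrix (Fin 3) (Fin 3) ℝ),
    ?_, ?_, ?_, ?_, ?_, ?_, rfl, rfl, ?_, ?_, ?_⟩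
  · ext i j
    simp [Matrix.IsSymm]
  · constructor
    · ext i j
      simp [Matrix.IsHermitian, Matrix.conjTranspose]
    · intro x
      have h : (x.sum fun i xi ↦ x.sum fun j xj ↦ star xi *
          (((3 : ℝ))⁻¹ • Matrix.of (fun _ _ => (1 : ℝ))) i j * xj)
          = (3 : ℝ)⁻¹ * (x 0 + x 1 + x 2) ^ 2 := by
        simp [Finsupp.sum_fintype, Fin.sum_univ_three]
        ring
      rw [h]
      positivity
  · ext i j
    fin_cases i <;> fin_cases j <;> simp [Matrix.IsSymm]
  · constructor
    · ext i j
      fin_cases i <;> fin_cases j <;>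
        norm_num [Matrix.conjTranspose, Matrix.IsHermitian, Matrix.vecHead, Matrix.vecTail]
    · intro x
      have h : (x.sum fun i xi ↦ x.sum fun j xj ↦ star xi *
          (!![1/3, 1/6, -1/6; 1/6, 1/3, 0; -1/6, 0, 1/3] :
          Matrix (Fin 3) (Fin 3) ℝ) i j * xj)
          = (6 : ℝ)⁻¹ * ((x 0 + x 1) ^ 2 + (x 0 - x 2) ^ 2 + (x 1) ^ 2 + (x 2) ^ 2) := by
        simp [Finsupp.sum_fintype, Fin.sum_univ_three, Matrix.cons_val_zero,
          Matrix.cons_val_one]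
        ring
      rw [h]
      positivity
  · ext i j
    simp [Matrix.IsSymm, Matrix.one_apply, eq_comm]
  · constructor
    · ext i j
      simp [Matrix.conjTranspose, Matrix.one_apply, eq_comm]
    · intro x
      have h : (x.sum fun i xi ↦ x.sum fun j xj ↦ star xi *
          (((3 : ℝ))⁻¹ • (1 : Matrix (Fin 3) (Fin 3) ℝ)) i j * xj)
          = (3 : ℝ)⁻¹ * ((x 0) ^ 2 + (x 1) ^ 2 + (x 2) ^ 2) := by
        simp [Finsupp.sum_fintype, Fin.sum_univ_three, Matrix.one_apply]
        ring
      rw [h]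
      positivity
  · simp [Matrix.trace, Fin.sum_univ_three]
    norm_num
  · intro i h1 h2
    interval_cases i <;>
      · simp [signedTrace, diagTraceR, Fin.sum_univ_three]
        norm_num
  · intro i h1 h2
    interval_cases i <;>
      · simp [signedTrace, diagTraceR, Fin.sum_univ_three]
        norm_num
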